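/- arXiv:2402.10687 — 3 statements merged into one kernel-verified Lean document; each statement's English description precedes it below -/
import Mathlib

section
/- Let n be a positive integer, b ∈ ℂⁿ, and c ∈ ℝ with ‖b‖² < c and 0 < c. Then the supremum over all v ≥ 0 and u ∈ ℂⁿ of the function g(u,v) = log(1+v) − v + 2√(1+v)·Re(⟪u, b⟫) − c‖u‖² equals log(1 + ‖b‖²/(c − ‖b‖²)), and this supremum is attained at v* = ‖b‖²/(c − ‖b‖²) and u* = (√(1+v*)/c)·b. -/
open scoped RealInnerProductSpace

/-- For `b ∈ ℂⁿ` and `c ∈ ℝ` with `‖b‖² < c`, `0 < c`, the supremum over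
`v ≥ 0`, `u ∈ ℂⁿ` of `g(u,v) = log(1+v) − v + 2√(1+v)·Re⟪u,b⟫ − c‖u‖²` equals
`log(1 + ‖b‖²/(c − ‖b‖²))`, attained at `v* = ‖b‖²/(c−‖b‖²)`, `u* = (√(1+v*)/c)·b`. -/
theorem stmt0 (n : ℕ) (hn : 0 < n) (b : EuclideanSpace ℂ (Fin n)) (c : ℝ)
    (hc : 0 < c) (hb : ‖b‖ ^ 2 < c) :
    let g : EuclideanSpace ℂ (Fin n) → ℝ → ℝ := fun u v =>
      Real.log (1 + v) - v + 2 * Real.sqrt (1 + v) * (inner ℂ u b : ℂ).re - c * ‖u‖ ^ 2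
    let vstar : ℝ := ‖b‖ ^ 2 / (c - ‖b‖ ^ 2)
    let ustar : EuclideanSpace ℂ (Fin n) := (Real.sqrt (1 + vstar) / c) • b
    (∀ v : ℝ, 0 ≤ v → ∀ u : EuclideanSpace ℂ (Fin n),
        g u v ≤ Real.log (1 + ‖b‖ ^ 2 / (c - ‖b‖ ^ 2)))
      ∧ 0 ≤ vstar
      ∧ g ustar vstar = Real.log (1 + ‖b‖ ^ 2 / (c - ‖b‖ ^ 2)) := by
  intro g vstar ustar
  have hb0 : (0:ℝ) ≤ ‖b‖ ^ 2 := sq_nonneg _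
  have hd : 0 < c - ‖b‖ ^ 2 := by linarith
  have hv0 : 0 ≤ vstar := div_nonneg hb0 hd.le
  have h1v : 1 + vstar = c / (c - ‖b‖ ^ 2) := by
    show 1 + ‖b‖ ^ 2 / (c - ‖b‖ ^ 2) = _
    rw [one_add_div hd.ne']
    congr 1
    ring
  have htarget : Real.log (1 + ‖b‖ ^ 2 / (c - ‖b‖ ^ 2))
      = - Real.log ((c - ‖b‖ ^ 2) / c) := by
    rw [show (1 + ‖b‖ ^ 2 / (c - ‖b‖ ^ 2)) = c / (c - ‖b‖ ^ 2) by field_simp; ring,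
      ← Real.log_inv]
    congr 1
    field_simp
  -- expansion of smul inner/norm with real scalar
  have hinner : ∀ r : ℝ, ∀ u : EuclideanSpace ℂ (Fin n),
      ((inner ℂ u (r • b) : ℂ)).re = r * ((inner ℂ u b : ℂ)).re := by
    intro r u
    rw [← algebraMap_smul ℂ r b, Complex.coe_algebraMap, inner_smul_right]
    simp
  have hnorm : ∀ r : ℝ, ‖(r • b : EuclideanSpace ℂ (Fin n))‖ ^ 2 = r ^ 2 * ‖b‖ ^ 2 := by
    intro r
    rw [norm_smul]
    simp [mul_pow, sq_abs]
  refine ⟨?_, hv0, ?_⟩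
  · intro v hv u
    set s := Real.sqrt (1 + v) with hs
    have hs2 : s ^ 2 = 1 + v := Real.sq_sqrt (by linarith)
    -- Step 1: quadratic bound in u
    have key : 2 * s * ((inner ℂ u b : ℂ)).re - c * ‖u‖ ^ 2 ≤ s ^ 2 * ‖b‖ ^ 2 / c := by
      have h0 : (0:ℝ) ≤ ‖u - (s / c) • b‖ ^ 2 := sq_nonneg _
      have hexp : ‖u - (s / c) • b‖ ^ 2
          = ‖u‖ ^ 2 - 2 * ((s / c) * ((inner ℂ u b : ℂ)).re) + (s / c) ^ 2 * ‖b‖ ^ 2 := by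
        rw [@norm_sub_sq ℂ]
        simp only [RCLike.re_to_complex]
        rw [hinner, hnorm]
      rw [hexp] at h0
      have hc' : c ≠ 0 := ne_of_gt hc
      have h0c : (0:ℝ) ≤ (‖u‖ ^ 2 - 2 * ((s / c) * ((inner ℂ u b : ℂ)).re)
          + (s / c) ^ 2 * ‖b‖ ^ 2) * c := mul_nonneg h0 hc.le
      have hrw : (‖u‖ ^ 2 - 2 * ((s / c) * ((inner ℂ u b : ℂ)).re)
          + (s / c) ^ 2 * ‖b‖ ^ 2) * c
          = c * ‖u‖ ^ 2 - 2 * s * ((inner ℂ u b : ℂ)).re + s ^ 2 * ‖b‖ ^ 2 / c := by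
        field_simp
      rw [hrw] at h0c
      linarith
    -- Step 2: log bound in v
    have hvpos : (0:ℝ) < 1 + v := by linarith
    have hk : (0:ℝ) < (c - ‖b‖ ^ 2) / c := div_pos hd hc
    have hlog : Real.log ((c - ‖b‖ ^ 2) / c * (1 + v))
        ≤ (c - ‖b‖ ^ 2) / c * (1 + v) - 1 :=
      Real.log_le_sub_one_of_pos (mul_pos hk hvpos)
    rw [Real.log_mul (ne_of_gt hk) (ne_of_gt hvpos)] at hlog
    have hmul : (c - ‖b‖ ^ 2) / c * (1 + v) - 1 - v + (1 + v) * ‖b‖ ^ 2 / c = 0 := by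
      field_simp
      ring
    have hs2' : s ^ 2 * ‖b‖ ^ 2 / c = (1 + v) * ‖b‖ ^ 2 / c := by rw [hs2]
    rw [htarget]
    show Real.log (1 + v) - v + 2 * s * ((inner ℂ u b : ℂ)).re - c * ‖u‖ ^ 2
        ≤ - Real.log ((c - ‖b‖ ^ 2) / c)
    nlinarith [key, hlog, hmul]
  · -- attainment
    have hs2 : Real.sqrt (1 + vstar) ^ 2 = 1 + vstar := Real.sq_sqrt (by linarith)
    show Real.log (1 + vstar) - vstar
        + 2 * Real.sqrt (1 + vstar) * ((inner ℂ ustar b : ℂ)).re - c * ‖ustar‖ ^ 2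
        = Real.log (1 + ‖b‖ ^ 2 / (c - ‖b‖ ^ 2))
    have hiub : ((inner ℂ ustar b : ℂ)).re
        = (Real.sqrt (1 + vstar) / c) * ((inner ℂ b b : ℂ)).re := by
      show ((inner ℂ ((Real.sqrt (1 + vstar) / c) • b) b : ℂ)).re = _
      rw [← algebraMap_smul ℂ (Real.sqrt (1 + vstar) / c) b, Complex.coe_algebraMap,
        inner_smul_left]
      simp
    have hbb : ((inner ℂ b b : ℂ)).re = ‖b‖ ^ 2 := by
      rw [inner_self_eq_norm_sq_to_K]
      norm_cast
    have hnu : ‖ustar‖ ^ 2 = (Real.sqrt (1 + vstar) / c) ^ 2 * ‖b‖ ^ 2 := hnorm _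
    rw [hiub, hbb, hnu]
    set t := Real.sqrt (1 + vstar) with ht
    have hc' : c ≠ 0 := ne_of_gt hc
    have hd' : c - ‖b‖ ^ 2 ≠ 0 := ne_of_gt hd
    have hA : 2 * t * (t / c * ‖b‖ ^ 2) - c * ((t / c) ^ 2 * ‖b‖ ^ 2)
        = t ^ 2 * ‖b‖ ^ 2 / c := by
      field_simp
      ring
    have hA2 : t ^ 2 * ‖b‖ ^ 2 / c = vstar := by
      rw [hs2, h1v]
      show c / (c - ‖b‖ ^ 2) * ‖b‖ ^ 2 / c = ‖b‖ ^ 2 / (c - ‖b‖ ^ 2)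
      field_simp
    have hfin : 1 + vstar = 1 + ‖b‖ ^ 2 / (c - ‖b‖ ^ 2) := rfl
    rw [← hfin]
    linarith [hA.trans hA2]
end

section
/- Let γ ∈ ℝ with γ ≥ 0. Then for every v ≥ 0, log(1+v) − v + (1+v)·γ/(1+γ) ≤ log(1+γ), with equality if and only if v = γ. -/
/-- For `γ ≥ 0` and every `v ≥ 0`:
`log(1+v) − v + (1+v)·γ/(1+γ) ≤ log(1+γ)`, with equality iff `v = γ`. -/
theorem stmt2 (γ : ℝ) (hγ : 0 ≤ γ) (v : ℝ) (hv : 0 ≤ v) :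
    Real.log (1 + v) - v + (1 + v) * γ / (1 + γ) ≤ Real.log (1 + γ)
      ∧ (Real.log (1 + v) - v + (1 + v) * γ / (1 + γ) = Real.log (1 + γ) ↔ v = γ) := by
  have hγ1 : (0:ℝ) < 1 + γ := by linarith
  have hv1 : (0:ℝ) < 1 + v := by linarith
  have hrw : -v + (1 + v) * γ / (1 + γ) = (γ - v) / (1 + γ) := by
    field_simp; ring
  have hstrict : v ≠ γ →
      Real.log (1 + v) - v + (1 + v) * γ / (1 + γ) < Real.log (1 + γ) := by
    intro h
    have hx : (1 + v) / (1 + γ) ≠ 1 := by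
      intro hh
      apply h
      field_simp at hh
      linarith
    have hlt := Real.log_lt_sub_one_of_pos (div_pos hv1 hγ1) hx
    rw [Real.log_div (ne_of_gt hv1) (ne_of_gt hγ1)] at hlt
    have heq : (1 + v) / (1 + γ) - 1 = (v - γ) / (1 + γ) := by
      field_simp; ring
    rw [heq] at hlt
    have h3 : (v - γ) / (1 + γ) + (γ - v) / (1 + γ) = 0 := by
      field_simp; ring
    linarith [hrw]
  have heqcase : v = γ →
      Real.log (1 + v) - v + (1 + v) * γ / (1 + γ) = Real.log (1 + γ) := by
    intro h
    subst h
    have : (1 + v) * v / (1 + v) = v := by field_simp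
    linarith
  rcases eq_or_ne v γ with h | h
  · exact ⟨le_of_eq (heqcase h), ⟨fun _ => h, heqcase⟩⟩
  · exact ⟨le_of_lt (hstrict h), ⟨fun he => absurd he (ne_of_lt (hstrict h)), heqcase⟩⟩
end

section
/- Let Ξ be an n×n Hermitian positive definite complex matrix, λ > 0 a real number, C an n×n Hermitian positive semidefinite complex matrix, and w₀, ω ∈ ℂⁿ. For μ ≥ 0 define w(μ) = (Ξ + μλI)⁻¹(ω + μ·C·w₀) and P(μ) = λ‖w(μ)‖² − 2·Re(w₀ᴴ C w(μ)). Then P is monotonically non-increasing on [0, ∞); i.e., for all 0 ≤ μ₁ ≤ μ₂, P(μ₂) ≤ P(μ₁). -/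
open scoped Matrix ComplexOrder

open Matrix

private lemma smul_one_posSemidef {n : ℕ} {c : ℝ} (hc : 0 ≤ c) :
    (((c : ℂ)) • (1 : Matrix (Fin n) (Fin n) ℂ)).PosSemidef := by
  rw [smul_one_eq_diagonal]
  exact Matrix.posSemidef_diagonal_iff.mpr fun i => by
    simpa using (Complex.zero_le_real).mpr hc

private lemma quad_min {n : ℕ} {M : Matrix (Fin n) (Fin n) ℂ} (hM : M.PosDef)
    (b v : Fin n → ℂ) :
    (star (M⁻¹ *ᵥ b) ⬝ᵥ (M *ᵥ (M⁻¹ *ᵥ b))).re - 2 * (star b ⬝ᵥ (M⁻¹ *ᵥ b)).re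
      ≤ (star v ⬝ᵥ (M *ᵥ v)).re - 2 * (star b ⬝ᵥ v).re := by
  set w := M⁻¹ *ᵥ b with hw
  have hMw : M *ᵥ w = b := by
    rw [hw, mulVec_mulVec, Matrix.mul_nonsing_inv _
      ((Matrix.isUnit_iff_isUnit_det M).1 hM.isUnit), one_mulVec]
  set d := v - w with hd
  have hv : v = w + d := by simp [hd]
  have hdd : 0 ≤ (star d ⬝ᵥ (M *ᵥ d)).re := hM.posSemidef.re_dotProduct_nonneg d
  have h1 : (star w ⬝ᵥ (M *ᵥ d)).re = (star d ⬝ᵥ b).re := by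
    have : star d ⬝ᵥ (M *ᵥ w) = star (star w ⬝ᵥ (M *ᵥ d)) := by
      rw [star_dotProduct, star_mulVec, hM.isHermitian.eq, ← dotProduct_mulVec]
    have h := congrArg Complex.re this
    rw [hMw] at h
    simpa using h.symm
  have h3 : (star b ⬝ᵥ d).re = (star d ⬝ᵥ b).re := by
    rw [star_dotProduct]; simp
  rw [hv]
  have hMwd : M *ᵥ (w + d) = M *ᵥ w + M *ᵥ d := by rw [mulVec_add]
  rw [hMwd, hMw]
  simp only [star_add, add_dotProduct, dotProduct_add, Complex.add_re]
  linarith [hdd, h1, h3]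

private lemma lagr {n : ℕ} (Ξ C : Matrix (Fin n) (Fin n) ℂ) (hC : Cᴴ = C)
    (lam μ : ℝ) (w₀ ω v : Fin n → ℂ) :
    (star v ⬝ᵥ ((Ξ + ((μ * lam : ℝ) : ℂ) • (1 : Matrix (Fin n) (Fin n) ℂ)) *ᵥ v)).re
        - 2 * (star (ω + (μ : ℂ) • (C *ᵥ w₀)) ⬝ᵥ v).re
      = ((star v ⬝ᵥ (Ξ *ᵥ v)).re - 2 * (star ω ⬝ᵥ v).re)
        + μ * (lam * (star v ⬝ᵥ v).re - 2 * (star w₀ ⬝ᵥ (C *ᵥ v)).re) := by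
  have hsym : star (C *ᵥ w₀) ⬝ᵥ v = star w₀ ⬝ᵥ (C *ᵥ v) := by
    rw [star_mulVec, hC, ← dotProduct_mulVec]
  rw [add_mulVec, smul_mulVec, one_mulVec, dotProduct_add, dotProduct_smul,
    star_add, star_smul, add_dotProduct, smul_dotProduct, hsym]
  simp only [Complex.star_def, Complex.conj_ofReal, smul_eq_mul, Complex.add_re,
    Complex.mul_re, Complex.ofReal_re, Complex.ofReal_im]
  ring

/-- With `Ξ` Hermitian positive definite, `λ > 0`, `C` Hermitian positive
semidefinite, `w₀, ω ∈ ℂⁿ`, define for `μ ≥ 0`: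
`w(μ) = (Ξ + μλI)⁻¹(ω + μ·C·w₀)` and `P(μ) = λ‖w(μ)‖² − 2·Re(w₀ᴴ C w(μ))`.
Then `P` is monotonically non-increasing on `[0, ∞)`. -/
theorem stmt5 (n : ℕ) (Ξ : Matrix (Fin n) (Fin n) ℂ) (hΞ : Ξ.PosDef)
    (lam : ℝ) (hlam : 0 < lam)
    (C : Matrix (Fin n) (Fin n) ℂ) (hC : C.PosSemidef) (w₀ ω : Fin n → ℂ) :
    let w : ℝ → (Fin n → ℂ) := fun μ =>
      (Ξ + ((μ * lam : ℝ) : ℂ) • (1 : Matrix (Fin n) (Fin n) ℂ))⁻¹ *ᵥ (ω + (μ : ℂ) • (C *ᵥ w₀))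
    let P : ℝ → ℝ := fun μ =>
      lam * (star (w μ) ⬝ᵥ w μ).re - 2 * (star w₀ ⬝ᵥ (C *ᵥ w μ)).re
    ∀ μ₁ μ₂ : ℝ, 0 ≤ μ₁ → μ₁ ≤ μ₂ → P μ₂ ≤ P μ₁ := by
  intro w P μ₁ μ₂ h1 h12
  rcases eq_or_lt_of_le h12 with rfl | hlt
  · exact le_refl _
  have h2 : (0:ℝ) ≤ μ₂ := le_trans h1 h12
  set F : (Fin n → ℂ) → ℝ := fun v => (star v ⬝ᵥ (Ξ *ᵥ v)).re - 2 * (star ω ⬝ᵥ v).re with hF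
  set Q : (Fin n → ℂ) → ℝ := fun v =>
    lam * (star v ⬝ᵥ v).re - 2 * (star w₀ ⬝ᵥ (C *ᵥ v)).re with hQ
  have key : ∀ μ : ℝ, 0 ≤ μ → ∀ v, F (w μ) + μ * Q (w μ) ≤ F v + μ * Q v := by
    intro μ hμ v
    have hpos : (Ξ + ((μ * lam : ℝ) : ℂ) • (1 : Matrix (Fin n) (Fin n) ℂ)).PosDef :=
      hΞ.add_posSemidef (smul_one_posSemidef (mul_nonneg hμ hlam.le))
    have h := quad_min hpos (ω + (μ : ℂ) • (C *ᵥ w₀)) v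
    rw [lagr Ξ C hC.isHermitian.eq lam μ w₀ ω, lagr Ξ C hC.isHermitian.eq lam μ w₀ ω] at h
    exact h
  have A := key μ₁ h1 (w μ₂)
  have B := key μ₂ h2 (w μ₁)
  have hP1 : P μ₁ = Q (w μ₁) := rfl
  have hP2 : P μ₂ = Q (w μ₂) := rfl
  rw [hP1, hP2]
  nlinarith [A, B, hlt]
end
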